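/- arXiv:2401.03776 — 2 statements merged into one kernel-verified Lean document; each statement's English description precedes it below -/
import Mathlib

section
/- Let p, q : ℝ → ℝ be measurable with sup_{x ≤ z₀} (1+x²)^α |p(x) − q(x)| = C < ∞ for some α > 1 and z₀ ∈ ℝ, and suppose p, q are integrable on rays (−∞, ζ]. Then for any σ > 0 and any ε ∈ (0, 2α − 2), the quantity ∫_{-∞}^{z} ∫_{-∞}^{ζ} |p(x) − q(x)| dx · e^{σζ} dζ is bounded, uniformly over z ≤ z₀, by e^{σz₀} · C · K_ε · ∫_{-∞}^{z₀} (∫_{-∞}^{ζ} (1+x²)^{-(2α − 1/2 − ε)} dx)^{1/2} dζ, where K_ε = (√π Γ(ε)/Γ(ε + 1/2))^{1/2}, and this last iterated integral is finite. -/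
open MeasureTheory Set

lemma myInt {s : ℝ} (hs : 1/2 < s) :
    Integrable (fun x : ℝ => (1 + x ^ 2) ^ (-s)) := by
  have h := integrable_rpow_neg_one_add_norm_sq (E := ℝ) (μ := volume) (r := 2*s)
    (by simp; linarith)
  have : ∀ x : ℝ, ((1:ℝ) + ‖x‖ ^ 2) ^ (-(2*s)/2) = (1 + x ^ 2) ^ (-s) := by
    intro x
    rw [Real.norm_eq_abs, sq_abs]
    norm_num [neg_div]
  simpa only [this] using h

-- substitution: ∫_{Ioo 0 1} t^{-1/2}(1-t)^{ε-1} = ∫_{Ioi 0} 2 (1+x²)^{-(1/2+ε)}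
lemma mySub (ε : ℝ) :
    ∫ t in Ioo (0:ℝ) 1, t ^ (-(1/2) : ℝ) * (1 - t) ^ (ε - 1)
      = ∫ x in Ioi (0:ℝ), 2 * (1 + x ^ 2) ^ (-(1/2 + ε)) := by
  set f : ℝ → ℝ := fun x => 1 - (1 + x ^ 2)⁻¹ with hf
  have hpos : ∀ x : ℝ, (0:ℝ) < 1 + x ^ 2 := fun x => by positivity
  have himg : f '' Ioi 0 = Ioo (0:ℝ) 1 := by
    ext t
    constructor
    · rintro ⟨x, hx, rfl⟩
      have h1 : (1:ℝ) < 1 + x ^ 2 := by nlinarith [mem_Ioi.mp hx]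
      have h2 : (0:ℝ) < (1 + x ^ 2)⁻¹ := by positivity
      have h3 : (1 + x ^ 2)⁻¹ < 1 := by
        rw [inv_lt_one_iff₀]; right; exact h1
      constructor <;> simp [hf] <;> linarith
    · rintro ⟨ht0, ht1⟩
      refine ⟨Real.sqrt (t / (1 - t)), ?_, ?_⟩
      · have : (0:ℝ) < t / (1 - t) := div_pos ht0 (by linarith)
        exact Real.sqrt_pos.mpr this
      · have h1t : (0:ℝ) < 1 - t := by linarith
        have hsq : Real.sqrt (t / (1 - t)) ^ 2 = t / (1 - t) :=
          Real.sq_sqrt (le_of_lt (div_pos ht0 h1t))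
        simp only [hf, hsq]
        have : 1 + t / (1 - t) = (1 - t)⁻¹ := by field_simp; ring
        rw [this, inv_inv]
        ring
  have hderiv : ∀ x ∈ Ioi (0:ℝ),
      HasDerivWithinAt f (2 * x / (1 + x ^ 2) ^ 2) (Ioi 0) x := by
    intro x _
    have h0 : HasDerivAt (fun x : ℝ => 1 + x ^ 2) (2 * x) x := by
      simpa using (hasDerivAt_pow 2 x).const_add 1
    have h1 : HasDerivAt (fun x : ℝ => (1 + x ^ 2)⁻¹)
        (-(2 * x) / (1 + x ^ 2) ^ 2) x := h0.inv (ne_of_gt (hpos x))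
    have h2 := h1.const_sub 1
    have : -(-(2 * x) / (1 + x ^ 2) ^ 2) = 2 * x / (1 + x ^ 2) ^ 2 := by ring
    rw [this] at h2
    exact h2.hasDerivWithinAt
  have hinj : InjOn f (Ioi 0) := by
    intro a ha b hb hab
    simp only [hf] at hab
    have h1 : (1 + a ^ 2)⁻¹ = (1 + b ^ 2)⁻¹ := by linarith
    have h2 : (1:ℝ) + a ^ 2 = 1 + b ^ 2 := inv_injective h1
    have h3 : a ^ 2 = b ^ 2 := by linarith
    rw [← Real.sqrt_sq (le_of_lt (mem_Ioi.mp ha)), h3,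
      Real.sqrt_sq (le_of_lt (mem_Ioi.mp hb))]
  have := integral_image_eq_integral_abs_deriv_smul measurableSet_Ioi hderiv hinj
    (fun t => t ^ (-(1/2) : ℝ) * (1 - t) ^ (ε - 1))
  rw [himg] at this
  rw [this]
  refine setIntegral_congr_fun measurableSet_Ioi (fun x hx => ?_)
  have hx0 : (0:ℝ) < x := hx
  have hy : (0:ℝ) < 1 + x ^ 2 := hpos x
  have hfx : 1 - (1 + x ^ 2)⁻¹ = x ^ 2 / (1 + x ^ 2) := by field_simp; ring
  have h1mfx : 1 - (x ^ 2 / (1 + x ^ 2)) = (1 + x ^ 2)⁻¹ := by field_simp; ring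
  simp only [hf, smul_eq_mul, hfx, h1mfx]
  have e1 : (x ^ 2 / (1 + x ^ 2)) ^ (-(1/2) : ℝ)
      = x⁻¹ * (1 + x ^ 2) ^ ((1/2) : ℝ) := by
    rw [Real.div_rpow (sq_nonneg x) hy.le]
    have : (x ^ 2 : ℝ) ^ (-(1/2) : ℝ) = x⁻¹ := by
      rw [← Real.rpow_natCast x 2, ← Real.rpow_mul hx0.le]
      norm_num [Real.rpow_neg_one]
    rw [this, Real.rpow_neg hy.le, div_inv_eq_mul]
  have e2 : ((1 + x ^ 2)⁻¹ : ℝ) ^ (ε - 1) = (1 + x ^ 2) ^ (1 - ε) := by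
    rw [← Real.rpow_neg_one, ← Real.rpow_mul hy.le]
    ring_nf
  have e3 : |2 * x / (1 + x ^ 2) ^ 2| = 2 * x * (1 + x ^ 2) ^ ((-2 : ℝ)) := by
    rw [abs_of_pos (by positivity)]
    rw [div_eq_mul_inv, ← Real.rpow_natCast (1 + x ^ 2) 2, ← Real.rpow_neg hy.le]
    norm_num
  rw [e1, e2, e3]
  rw [show (2:ℝ) * x * (1 + x ^ 2) ^ ((-2:ℝ)) * (x⁻¹ * (1 + x ^ 2) ^ ((1/2):ℝ) * (1 + x ^ 2) ^ (1 - ε))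
    = 2 * (x * x⁻¹) * ((1 + x ^ 2) ^ ((-2:ℝ)) * (1 + x ^ 2) ^ ((1/2):ℝ) * (1 + x ^ 2) ^ (1 - ε)) by ring]
  rw [mul_inv_cancel₀ (ne_of_gt hx0), ← Real.rpow_add hy, ← Real.rpow_add hy]
  norm_num
  ring_nf

lemma myBeta {ε : ℝ} (hε : 0 < ε) :
    ∫ t in Ioo (0:ℝ) 1, t ^ (-(1/2) : ℝ) * (1 - t) ^ (ε - 1)
      = Real.sqrt Real.pi * Real.Gamma ε / Real.Gamma (ε + 1/2) := by
  set I : ℝ := ∫ t in Ioo (0:ℝ) 1, t ^ (-(1/2) : ℝ) * (1 - t) ^ (ε - 1) with hI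
  have hB := Complex.Gamma_mul_Gamma_eq_betaIntegral (s := (1/2 : ℂ)) (t := (ε:ℂ))
    (by norm_num) (by simpa using hε)
  have hBI : Complex.betaIntegral (1/2) (ε:ℂ) = (I : ℂ) := by
    rw [Complex.betaIntegral, intervalIntegral.integral_of_le zero_le_one,
      integral_Ioc_eq_integral_Ioo]
    have hcong : ∀ t ∈ Ioo (0:ℝ) 1, (t:ℂ) ^ ((1/2:ℂ)-1) * (1-(t:ℂ)) ^ ((ε:ℂ)-1)
        = ((t ^ (-(1/2):ℝ) * (1 - t) ^ (ε-1) : ℝ) : ℂ) := by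
      intro t ht
      obtain ⟨ht0, ht1⟩ := ht
      rw [show ((1/2:ℂ)-1) = ((-(1/2):ℝ):ℂ) by norm_num,
        show ((ε:ℂ)-1) = ((ε-1:ℝ):ℂ) by push_cast; ring,
        show (1:ℂ) - (t:ℂ) = ((1-t:ℝ):ℂ) by push_cast; ring,
        ← Complex.ofReal_cpow ht0.le, ← Complex.ofReal_cpow (by linarith),
        ← Complex.ofReal_mul]
    rw [setIntegral_congr_fun measurableSet_Ioo hcong]
    exact integral_ofReal
  rw [hBI] at hB
  have h12 : ((1/2 : ℂ)) = ((1/2 : ℝ) : ℂ) := by norm_num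
  have h2 : ((1/2 : ℂ) + (ε:ℂ)) = ((ε + 1/2 : ℝ) : ℂ) := by push_cast; ring
  rw [h2, h12, Complex.Gamma_ofReal, Complex.Gamma_ofReal, Complex.Gamma_ofReal] at hB
  rw [← Complex.ofReal_mul, ← Complex.ofReal_mul] at hB
  have hreal : Real.Gamma (1/2) * Real.Gamma ε = Real.Gamma (ε + 1/2) * I :=
    Complex.ofReal_injective hB
  rw [Real.Gamma_one_half_eq] at hreal
  have hpos : 0 < Real.Gamma (ε + 1/2) := Real.Gamma_pos_of_pos (by linarith)
  rw [eq_div_iff hpos.ne']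
  linear_combination -hreal

lemma myVal {ε : ℝ} (hε : 0 < ε) :
    ∫ x : ℝ, (1 + x ^ 2) ^ (-(1/2 + ε))
      = Real.sqrt Real.pi * Real.Gamma ε / Real.Gamma (ε + 1/2) := by
  have habs : ∫ x : ℝ, (1 + x ^ 2) ^ (-(1/2 + ε))
      = 2 * ∫ x in Ioi (0:ℝ), (1 + x ^ 2) ^ (-(1/2 + ε)) := by
    rw [← integral_comp_abs (f := fun x => (1 + x ^ 2) ^ (-(1/2 + ε)))]
    simp [sq_abs]
  rw [habs, ← MeasureTheory.integral_const_mul, ← mySub ε, myBeta hε]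

lemma myValLe {ε : ℝ} (hε : 0 < ε) (ζ : ℝ) :
    ∫ x in Iic ζ, (1 + x ^ 2) ^ (-(1/2 + ε))
      ≤ Real.sqrt Real.pi * Real.Gamma ε / Real.Gamma (ε + 1/2) := by
  rw [← myVal hε]
  exact setIntegral_le_integral (myInt (by linarith))
    (Filter.Eventually.of_forall fun x => by positivity)

lemma myNegRpow {r : ℝ} (hr : r < -1) :
    IntegrableOn (fun ζ : ℝ => (-ζ) ^ r) (Iic (-1 : ℝ)) := by
  have h : IntegrableOn (fun x : ℝ => x ^ r) (Ioi 1) :=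
    integrableOn_Ioi_rpow_of_lt hr one_pos
  have A : MeasurableEmbedding fun x : ℝ => -x :=
    (Homeomorph.neg ℝ).measurableEmbedding
  have : IntegrableOn (fun ζ : ℝ => (-ζ) ^ r) (Iic (-1 : ℝ))
      (Measure.map (fun x : ℝ => -x) volume) := by
    rw [A.integrableOn_map_iff]
    simp only [Function.comp_def, neg_neg, neg_preimage, neg_Iic, neg_neg]
    exact (integrableOn_Ici_iff_integrableOn_Ioi).mpr h
  rwa [Measure.map_neg_eq_self (volume : Measure ℝ)] at this

lemma myTail {β : ℝ} (hβ : 3/2 < β) (z₀ : ℝ) :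
    IntegrableOn (fun ζ => Real.sqrt (∫ x in Iic ζ, (1 + x ^ 2) ^ (-β))) (Iic z₀) := by
  have hw : Integrable (fun x : ℝ => (1 + x ^ 2) ^ (-β)) := myInt (by linarith)
  set G : ℝ → ℝ := fun ζ => ∫ x in Iic ζ, (1 + x ^ 2) ^ (-β) with hG
  have hwnn : ∀ x : ℝ, 0 ≤ (1 + x ^ 2) ^ (-β) := fun x => by positivity
  have hGmono : Monotone G := fun a b hab =>
    setIntegral_mono_set hw.integrableOn (Filter.Eventually.of_forall hwnn)
      (HasSubset.Subset.eventuallyLE (Iic_subset_Iic.mpr hab))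
  have hGnn : ∀ ζ, 0 ≤ G ζ := fun ζ =>
    setIntegral_nonneg measurableSet_Iic fun x _ => hwnn x
  have hGle : ∀ ζ, G ζ ≤ ∫ x : ℝ, (1 + x ^ 2) ^ (-β) := fun ζ =>
    setIntegral_le_integral hw (Filter.Eventually.of_forall hwnn)
  have hsm : Monotone fun ζ => Real.sqrt (G ζ) := fun a b hab => Real.sqrt_le_sqrt (hGmono hab)
  have hmeas : Measurable fun ζ => Real.sqrt (G ζ) := hsm.measurable
  -- bounded piece on Icc (-1) z₀
  have hIcc : IntegrableOn (fun ζ => Real.sqrt (G ζ)) (Icc (-1 : ℝ) z₀) := by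
    refine Measure.integrableOn_of_bounded (measure_Icc_lt_top).ne
      hmeas.aestronglyMeasurable
      (M := Real.sqrt (∫ x : ℝ, (1 + x ^ 2) ^ (-β))) ?_
    refine Filter.Eventually.of_forall fun ζ => ?_
    rw [Real.norm_eq_abs, abs_of_nonneg (Real.sqrt_nonneg _)]
    exact Real.sqrt_le_sqrt (hGle ζ)
  -- tail piece on Iic (-1)
  have hbound : ∀ ζ ≤ (-1 : ℝ),
      G ζ ≤ (-ζ) ^ (1 - 2 * β) / (2 * β - 1) := by
    intro ζ hζ
    have hζ0 : (0:ℝ) < -ζ := by linarith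
    have hcmp : G ζ ≤ ∫ x in Iic ζ, (-x) ^ (-(2 * β)) := by
      refine setIntegral_mono_on hw.integrableOn ?_ measurableSet_Iic ?_
      · -- integrability of (-x)^(-2β) on Iic ζ
        exact (myNegRpow (r := -(2 * β)) (by linarith)).mono_set
          (Iic_subset_Iic.mpr hζ)
      · intro x hx
        have hx1 : x ≤ -1 := le_trans hx hζ
        have hx0 : (0:ℝ) < -x := by linarith
        have h1 : (x:ℝ) ^ 2 ≤ 1 + x ^ 2 := by linarith [sq_nonneg x]
        have h2 : (0:ℝ) < x ^ 2 := by nlinarith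
        calc (1 + x ^ 2) ^ (-β) ≤ (x ^ 2) ^ (-β) :=
              Real.rpow_le_rpow_of_nonpos h2 h1 (by linarith)
          _ = (-x) ^ (-(2 * β)) := by
              rw [show (x:ℝ) ^ 2 = (-x) ^ 2 by ring, ← Real.rpow_natCast (-x) 2,
                ← Real.rpow_mul hx0.le]
              norm_num
    calc G ζ ≤ ∫ x in Iic ζ, (-x) ^ (-(2 * β)) := hcmp
      _ = ∫ x in Ioi (-ζ), x ^ (-(2 * β)) :=
          integral_comp_neg_Iic ζ (fun x => x ^ (-(2 * β)))
      _ = -(-ζ) ^ (-(2 * β) + 1) / (-(2 * β) + 1) :=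
          integral_Ioi_rpow_of_lt (by linarith) hζ0
      _ = (-ζ) ^ (1 - 2 * β) / (2 * β - 1) := by
          rw [show -(2 * β) + 1 = 1 - 2 * β by ring,
            div_eq_div_iff (by linarith) (by linarith)]
          ring
  have hIic1 : IntegrableOn (fun ζ => Real.sqrt (G ζ)) (Iic (-1 : ℝ)) := by
    have hr' : (1 - 2 * β) / 2 < -1 := by linarith
    have hdom : IntegrableOn
        (fun ζ : ℝ => (Real.sqrt (2 * β - 1))⁻¹ * (-ζ) ^ ((1 - 2 * β) / 2))
        (Iic (-1 : ℝ)) := (myNegRpow hr').const_mul _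
    refine Integrable.mono' hdom hmeas.aestronglyMeasurable ?_
    refine (ae_restrict_iff' measurableSet_Iic).mpr (Filter.Eventually.of_forall ?_)
    intro ζ hζ
    have hζ' : ζ ≤ (-1 : ℝ) := hζ
    have hζ0 : (0:ℝ) < -ζ := by linarith
    rw [Real.norm_eq_abs, abs_of_nonneg (Real.sqrt_nonneg _)]
    calc Real.sqrt (G ζ) ≤ Real.sqrt ((-ζ) ^ (1 - 2 * β) / (2 * β - 1)) :=
          Real.sqrt_le_sqrt (hbound ζ hζ')
      _ = (Real.sqrt (2 * β - 1))⁻¹ * (-ζ) ^ ((1 - 2 * β) / 2) := by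
          rw [Real.sqrt_div (Real.rpow_nonneg hζ0.le _), div_eq_mul_inv, mul_comm]
          congr 1
          rw [Real.sqrt_eq_rpow, ← Real.rpow_mul hζ0.le]
          ring_nf
  by_cases hz : z₀ ≤ (-1 : ℝ)
  · exact hIic1.mono_set (Iic_subset_Iic.mpr hz)
  · refine (hIic1.union hIcc).mono_set fun x hx => ?_
    rcases le_or_gt x (-1 : ℝ) with h | h
    · exact Or.inl h
    · exact Or.inr ⟨h.le, hx⟩

lemma myKey (p q : ℝ → ℝ) (hp : Measurable p) (hq : Measurable q)
    {α : ℝ} (hα : 1 < α) {z₀ : ℝ} {C : ℝ}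
    (hsup : ∀ x ≤ z₀, (1 + x ^ 2) ^ α * |p x - q x| ≤ C) (hC : 0 ≤ C)
    {ε : ℝ} (hε0 : 0 < ε) (hε2 : ε < 2 * α - 2) {ζ : ℝ} (hζ : ζ ≤ z₀) :
    ∫ x in Iic ζ, |p x - q x|
      ≤ Real.sqrt (∫ x in Iic ζ, (1 + x ^ 2) ^ (-(2 * α - 1/2 - ε))) *
        (C * Real.sqrt (Real.sqrt Real.pi * Real.Gamma ε / Real.Gamma (ε + 1/2))) := by
  set γ : ℝ := α - 1/4 - ε/2 with hγ
  set u : ℝ → ℝ := fun x => (1 + x ^ 2) ^ (-γ) with hu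
  set v : ℝ → ℝ := fun x => (1 + x ^ 2) ^ γ * |p x - q x| with hv
  have hbpos : ∀ x : ℝ, (0:ℝ) < 1 + x ^ 2 := fun x => by positivity
  have h1 : ∀ x, u x * v x = |p x - q x| := by
    intro x
    rw [hu, hv]
    simp only
    rw [← mul_assoc, ← Real.rpow_add (hbpos x), neg_add_cancel, Real.rpow_zero, one_mul]
  have hu2 : ∀ x : ℝ, u x ^ (2:ℕ) = (1 + x ^ 2) ^ (-(2 * α - 1/2 - ε)) := by
    intro x
    rw [hu]
    simp only
    rw [← Real.rpow_natCast ((1 + x ^ 2) ^ (-γ)) 2, ← Real.rpow_mul (hbpos x).le]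
    congr 1
    rw [hγ]; push_cast; ring
  have hv2 : ∀ x ≤ z₀, v x ^ (2:ℕ) ≤ C ^ 2 * (1 + x ^ 2) ^ (-(1/2 + ε)) := by
    intro x hx
    rw [hv]
    simp only
    have hsplit : ((1 + x ^ 2) ^ γ) ^ (2:ℕ)
        = (1 + x ^ 2) ^ (-(1/2 + ε)) * ((1 + x ^ 2) ^ α) ^ (2:ℕ) := by
      rw [← Real.rpow_natCast ((1 + x ^ 2) ^ γ) 2, ← Real.rpow_mul (hbpos x).le,
        ← Real.rpow_natCast ((1 + x ^ 2) ^ α) 2, ← Real.rpow_mul (hbpos x).le,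
        ← Real.rpow_add (hbpos x)]
      congr 1
      rw [hγ]; push_cast; ring
    rw [mul_pow, hsplit, mul_assoc, ← mul_pow]
    have hb : (0:ℝ) ≤ (1 + x ^ 2) ^ α * |p x - q x| := by positivity
    have := pow_le_pow_left₀ hb (hsup x hx) 2
    calc (1 + x ^ 2) ^ (-(1/2 + ε)) * ((1 + x ^ 2) ^ α * |p x - q x|) ^ 2
        ≤ (1 + x ^ 2) ^ (-(1/2 + ε)) * C ^ 2 := by
          exact mul_le_mul_of_nonneg_left this (by positivity)
      _ = C ^ 2 * (1 + x ^ 2) ^ (-(1/2 + ε)) := by ring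
  have humeas : Measurable u := by rw [hu]; fun_prop
  have hvmeas : Measurable v := by
    rw [hv]
    exact (by fun_prop : Measurable fun x : ℝ => (1 + x ^ 2) ^ γ).mul (hp.sub hq).abs
  set μ : Measure ℝ := volume.restrict (Iic ζ) with hμ
  have hu2int : Integrable (fun x => u x ^ (2:ℕ)) μ := by
    have := (myInt (s := 2 * α - 1/2 - ε) (by linarith)).integrableOn (s := Iic ζ)
    exact this.congr_fun (fun x _ => (hu2 x).symm) measurableSet_Iic
  have hwint : Integrable (fun x : ℝ => C ^ 2 * (1 + x ^ 2) ^ (-(1/2 + ε))) μ :=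
    ((myInt (s := 1/2 + ε) (by linarith)).integrableOn (s := Iic ζ)).const_mul _
  have hv2int : Integrable (fun x => v x ^ (2:ℕ)) μ := by
    refine hwint.mono' ((hvmeas.pow_const 2).aestronglyMeasurable) ?_
    rw [hμ]
    refine (ae_restrict_iff' measurableSet_Iic).mpr (Filter.Eventually.of_forall ?_)
    intro x hx
    rw [Real.norm_eq_abs, abs_of_nonneg (by positivity)]
    exact hv2 x (le_trans hx hζ)
  have hMu : MemLp u (ENNReal.ofReal 2) μ := by
    rw [show ENNReal.ofReal 2 = 2 by norm_num]
    exact (memLp_two_iff_integrable_sq humeas.aestronglyMeasurable).mpr hu2int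
  have hMv : MemLp v (ENNReal.ofReal 2) μ := by
    rw [show ENNReal.ofReal 2 = 2 by norm_num]
    exact (memLp_two_iff_integrable_sq hvmeas.aestronglyMeasurable).mpr hv2int
  have hconj : Real.HolderConjugate 2 2 := Real.HolderConjugate.two_two
  have hHolder := integral_mul_le_Lp_mul_Lq_of_nonneg hconj
    (Filter.Eventually.of_forall fun x => by positivity : 0 ≤ᵐ[μ] u)
    (Filter.Eventually.of_forall fun x => by positivity : 0 ≤ᵐ[μ] v)
    hMu hMv
  have rpow2 : ∀ y : ℝ, y ^ (2:ℝ) = y ^ (2:ℕ) := fun y => by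
    rw [show ((2:ℝ)) = ((2:ℕ):ℝ) by norm_num, Real.rpow_natCast]
  simp only [h1] at hHolder
  have hfac1 : (∫ a, u a ^ (2:ℝ) ∂μ) ^ ((1:ℝ)/2)
      = Real.sqrt (∫ x in Iic ζ, (1 + x ^ 2) ^ (-(2 * α - 1/2 - ε))) := by
    rw [← Real.sqrt_eq_rpow]
    congr 1
    refine integral_congr_ae (Filter.Eventually.of_forall fun x => ?_)
    show u x ^ (2:ℝ) = (1 + x ^ 2) ^ (-(2 * α - 1/2 - ε))
    rw [rpow2, hu2 x]
  have hfac2 : (∫ a, v a ^ (2:ℝ) ∂μ) ^ ((1:ℝ)/2)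
      ≤ C * Real.sqrt (Real.sqrt Real.pi * Real.Gamma ε / Real.Gamma (ε + 1/2)) := by
    have hle : ∫ a, v a ^ (2:ℝ) ∂μ
        ≤ C ^ 2 * (Real.sqrt Real.pi * Real.Gamma ε / Real.Gamma (ε + 1/2)) := by
      have e1 : ∫ a, v a ^ (2:ℝ) ∂μ = ∫ a, v a ^ (2:ℕ) ∂μ := by
        refine integral_congr_ae (Filter.Eventually.of_forall fun x => ?_)
        show v x ^ (2:ℝ) = v x ^ (2:ℕ)
        exact rpow2 _
      rw [e1]
      have step1 : ∫ a, v a ^ (2:ℕ) ∂μ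
          ≤ ∫ x : ℝ, C ^ 2 * (1 + x ^ 2) ^ (-(1/2 + ε)) ∂μ := by
        refine integral_mono_ae hv2int hwint ?_
        rw [hμ]
        refine (ae_restrict_iff' measurableSet_Iic).mpr (Filter.Eventually.of_forall ?_)
        intro x hx
        exact hv2 x (le_trans hx hζ)
      refine step1.trans ?_
      rw [integral_const_mul]
      exact mul_le_mul_of_nonneg_left (myValLe hε0 ζ) (by positivity)
    have hnn : (0:ℝ) ≤ ∫ a, v a ^ (2:ℝ) ∂μ :=
      integral_nonneg fun x => Real.rpow_nonneg (by positivity) _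
    calc (∫ a, v a ^ (2:ℝ) ∂μ) ^ ((1:ℝ)/2)
        ≤ (C ^ 2 * (Real.sqrt Real.pi * Real.Gamma ε / Real.Gamma (ε + 1/2))) ^ ((1:ℝ)/2) :=
          Real.rpow_le_rpow hnn hle (by norm_num)
      _ = C * Real.sqrt (Real.sqrt Real.pi * Real.Gamma ε / Real.Gamma (ε + 1/2)) := by
          rw [← Real.sqrt_eq_rpow, Real.sqrt_mul (sq_nonneg C), Real.sqrt_sq hC]
  calc ∫ x in Iic ζ, |p x - q x| ≤ (∫ a, u a ^ (2:ℝ) ∂μ) ^ ((1:ℝ)/2) * (∫ a, v a ^ (2:ℝ) ∂μ) ^ ((1:ℝ)/2) := hHolder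
    _ ≤ _ := by
        rw [hfac1]
        exact mul_le_mul_of_nonneg_left hfac2 (Real.sqrt_nonneg _)

/-- Cauchy–Schwarz estimate converting a weighted sup-norm density approximation into a
uniform option-price approximation. With `K_ε = (√π Γ(ε)/Γ(ε+1/2))^{1/2}`, for any
`z ≤ z₀` the weighted double integral of `|p − q|` is bounded by
`e^{σz₀}·C·K_ε·∫_{-∞}^{z₀} (∫_{-∞}^{ζ} (1+x²)^{-(2α−1/2−ε)} dx)^{1/2} dζ`, and the
latter iterated integral is finite. -/
theorem stmt_3 (p q : ℝ → ℝ) (hp : Measurable p) (hq : Measurable q)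
    (α : ℝ) (hα : 1 < α) (z₀ : ℝ) (C : ℝ)
    (hsup : ∀ x ≤ z₀, (1 + x ^ 2) ^ α * |p x - q x| ≤ C)
    (hpray : ∀ ζ : ℝ, IntegrableOn p (Iic ζ)) (hqray : ∀ ζ : ℝ, IntegrableOn q (Iic ζ))
    (σ : ℝ) (hσ : 0 < σ) (ε : ℝ) (hε : ε ∈ Ioo 0 (2 * α - 2)) :
    (∀ z ≤ z₀,
      ∫ ζ in Iic z, (∫ x in Iic ζ, |p x - q x|) * Real.exp (σ * ζ)
        ≤ Real.exp (σ * z₀) * C *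
          Real.sqrt (Real.sqrt Real.pi * Real.Gamma ε / Real.Gamma (ε + 1 / 2)) *
          ∫ ζ in Iic z₀, Real.sqrt (∫ x in Iic ζ, (1 + x ^ 2) ^ (-(2 * α - 1 / 2 - ε)))) ∧
    IntegrableOn
      (fun ζ => Real.sqrt (∫ x in Iic ζ, (1 + x ^ 2) ^ (-(2 * α - 1 / 2 - ε)))) (Iic z₀) := by
  obtain ⟨hε0, hε2⟩ := hε
  have htail : IntegrableOn
      (fun ζ => Real.sqrt (∫ x in Iic ζ, (1 + x ^ 2) ^ (-(2 * α - 1 / 2 - ε)))) (Iic z₀) :=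
    myTail (by linarith) z₀
  refine ⟨?_, htail⟩
  intro z hz
  have hC : 0 ≤ C := le_trans (by positivity) (hsup z₀ le_rfl)
  set K : ℝ := Real.sqrt (Real.sqrt Real.pi * Real.Gamma ε / Real.Gamma (ε + 1 / 2)) with hK
  have hKnn : 0 ≤ K := Real.sqrt_nonneg _
  set G : ℝ → ℝ := fun ζ => ∫ x in Iic ζ, (1 + x ^ 2) ^ (-(2 * α - 1 / 2 - ε)) with hG
  set c : ℝ := Real.exp (σ * z₀) * C * K with hc
  have hcnn : 0 ≤ c := by positivity
  set F : ℝ → ℝ := fun ζ => (∫ x in Iic ζ, |p x - q x|) * Real.exp (σ * ζ) with hF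
  set H : ℝ → ℝ := fun ζ => c * Real.sqrt (G ζ) with hH
  -- inner integral facts
  have hΔint : ∀ ζ : ℝ, IntegrableOn (fun x => |p x - q x|) (Iic ζ) := fun ζ =>
    ((hpray ζ).sub (hqray ζ)).abs
  have hInn : ∀ ζ : ℝ, 0 ≤ ∫ x in Iic ζ, |p x - q x| := fun ζ =>
    setIntegral_nonneg measurableSet_Iic fun x _ => abs_nonneg _
  -- pointwise bound for ζ ≤ z₀
  have hpt : ∀ ζ ∈ Iic z, F ζ ≤ H ζ := by
    intro ζ hζ
    have hζz₀ : ζ ≤ z₀ := le_trans hζ hz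
    have hkey := myKey p q hp hq hα hsup hC hε0 hε2 hζz₀
    have hGnn : 0 ≤ Real.sqrt (G ζ) := Real.sqrt_nonneg _
    have hexp : Real.exp (σ * ζ) ≤ Real.exp (σ * z₀) :=
      Real.exp_le_exp.mpr (by nlinarith)
    calc F ζ ≤ (Real.sqrt (G ζ) * (C * K)) * Real.exp (σ * ζ) :=
          mul_le_mul_of_nonneg_right hkey (Real.exp_pos _).le
      _ ≤ (Real.sqrt (G ζ) * (C * K)) * Real.exp (σ * z₀) :=
          mul_le_mul_of_nonneg_left hexp (by positivity)
      _ = H ζ := by rw [hH, hc]; ring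
  -- measurability of F
  have hmonoI : Monotone fun ζ => ∫ x in Iic ζ, |p x - q x| := fun a b hab =>
    setIntegral_mono_set (hΔint b) (Filter.Eventually.of_forall fun x => abs_nonneg _)
      (HasSubset.Subset.eventuallyLE (Iic_subset_Iic.mpr hab))
  have hFmeas : Measurable F := by
    rw [hF]
    exact (hmonoI.measurable).mul (Real.measurable_exp.comp (measurable_const.mul measurable_id))
  -- integrability of H on Iic z and Iic z₀
  have hHint : IntegrableOn H (Iic z₀) := htail.const_mul c
  have hHintz : IntegrableOn H (Iic z) := hHint.mono_set (Iic_subset_Iic.mpr hz)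
  -- F integrable on Iic z
  have hFint : IntegrableOn F (Iic z) := by
    refine hHintz.mono' hFmeas.aestronglyMeasurable ?_
    refine (ae_restrict_iff' measurableSet_Iic).mpr (Filter.Eventually.of_forall ?_)
    intro ζ hζ
    rw [Real.norm_eq_abs, abs_of_nonneg (mul_nonneg (hInn ζ) (Real.exp_pos _).le)]
    exact hpt ζ hζ
  calc ∫ ζ in Iic z, F ζ ≤ ∫ ζ in Iic z, H ζ :=
        setIntegral_mono_on hFint hHintz measurableSet_Iic hpt
    _ ≤ ∫ ζ in Iic z₀, H ζ :=
        setIntegral_mono_set hHint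
          (Filter.Eventually.of_forall fun ζ => by
            exact mul_nonneg hcnn (Real.sqrt_nonneg _))
          (HasSubset.Subset.eventuallyLE (Iic_subset_Iic.mpr hz))
    _ = c * ∫ ζ in Iic z₀, Real.sqrt (G ζ) := integral_const_mul c _
    _ = Real.exp (σ * z₀) * C * K * ∫ ζ in Iic z₀, Real.sqrt (G ζ) := by rw [hc]
end

section
/- Let (v_t)_{t≥0} be a nonnegative measurable adapted process and B a Brownian motion, with M_θ = ∫_0^θ √(v_t) dB_t well-defined as an L² martingale, Z_θ = −(1/2)∫_0^θ v_t dt + M_θ, σ₀(θ)² = Var(Z_θ), and σ̃₀(θ)² = ∫_0^θ E[v_t] dt. Then |σ₀(θ)² − σ̃₀(θ)²| ≤ (1/4) Var(∫_0^θ v_t dt) + σ̃₀(θ) √(Var(∫_0^θ v_t dt)). -/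
open MeasureTheory ProbabilityTheory Set

private lemma aux_int_mul {Ω : Type*} [MeasurableSpace Ω] {μ : Measure Ω} {f g : Ω → ℝ}
    (hf : MeasureTheory.MemLp f 2 μ) (hg : MeasureTheory.MemLp g 2 μ) :
    Integrable (fun ω => f ω * g ω) μ := by
  have h1 : Integrable (fun ω => (f ω + g ω) ^ 2) μ := by
    have := (hf.add hg).integrable_sq
    simpa [Pi.add_apply] using this
  have h2 := hf.integrable_sq
  have h3 := hg.integrable_sq
  have heq : (fun ω => f ω * g ω) =
      fun ω => ((f ω + g ω) ^ 2 - f ω ^ 2 - g ω ^ 2) / 2 := by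
    funext ω; ring
  rw [heq]
  exact ((h1.sub h2).sub h3).div_const 2

private lemma aux_cs {Ω : Type*} [MeasurableSpace Ω] {μ : Measure Ω} {f g : Ω → ℝ}
    (hf : MeasureTheory.MemLp f 2 μ) (hg : MeasureTheory.MemLp g 2 μ) :
    |∫ ω, f ω * g ω ∂μ| ≤
      Real.sqrt (∫ ω, f ω ^ 2 ∂μ) * Real.sqrt (∫ ω, g ω ^ 2 ∂μ) := by
  set A := ∫ ω, f ω ^ 2 ∂μ with hA
  set B := ∫ ω, f ω * g ω ∂μ with hB
  set C := ∫ ω, g ω ^ 2 ∂μ with hC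
  have hAnn : 0 ≤ A := integral_nonneg fun ω => sq_nonneg _
  have hCnn : 0 ≤ C := integral_nonneg fun ω => sq_nonneg _
  have hfg := aux_int_mul hf hg
  have key : ∀ t : ℝ, 0 ≤ A * (t * t) + (2 * B) * t + C := by
    intro t
    have h0 : 0 ≤ ∫ ω, (t * f ω + g ω) ^ 2 ∂μ :=
      integral_nonneg fun ω => sq_nonneg _
    have heq : (fun ω => (t * f ω + g ω) ^ 2) =
        fun ω => t * t * f ω ^ 2 + (2 * t) * (f ω * g ω) + g ω ^ 2 := by
      funext ω; ring
    rw [heq] at h0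
    have hI1 : Integrable (fun ω => t * t * f ω ^ 2) μ := (hf.integrable_sq).const_mul _
    have hI2 : Integrable (fun ω => (2 * t) * (f ω * g ω)) μ := hfg.const_mul _
    have hI12 : Integrable (fun ω => t * t * f ω ^ 2 + (2 * t) * (f ω * g ω)) μ := hI1.add hI2
    rw [integral_add hI12 hg.integrable_sq, integral_add hI1 hI2,
      integral_const_mul, integral_const_mul] at h0
    calc (0:ℝ) ≤ t * t * A + 2 * t * B + C := h0
    _ = A * (t * t) + (2 * B) * t + C := by ring
  have hd := discrim_le_zero key
  rw [discrim] at hd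
  have hBC : B ^ 2 ≤ A * C := by nlinarith
  have : |B| = Real.sqrt (B ^ 2) := by
    rw [Real.sqrt_sq_eq_abs]
  rw [this, ← Real.sqrt_mul hAnn]
  exact Real.sqrt_le_sqrt hBC

/-- With `M_θ = ∫_0^θ √v_t dB_t` an `L²` martingale increment (`E[M] = 0`,
`E[M²] = E[∫_0^θ v_t dt] = σ̃₀(θ)²`), `Z_θ = −(1/2)∫_0^θ v_t dt + M_θ`, and
`σ₀(θ)² = Var(Z_θ)`, one has
`|σ₀(θ)² − σ̃₀(θ)²| ≤ (1/4)Var(∫_0^θ v_t dt) + σ̃₀(θ)√Var(∫_0^θ v_t dt)`. -/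
theorem stmt_13 {Ω : Type*} [MeasurableSpace Ω] (μ : Measure Ω) [IsProbabilityMeasure μ]
    (θ : ℝ) (hθ : 0 < θ) (v : ℝ → Ω → ℝ) (hv : ∀ t ω, 0 ≤ v t ω)
    (hvmeas : Measurable (Function.uncurry v))
    (M V Z : Ω → ℝ) (hMmeas : Measurable M) (hM2int : MeasureTheory.MemLp M 2 μ) (hV2int : MeasureTheory.MemLp V 2 μ)
    (hM0 : ∫ ω, M ω ∂μ = 0)
    (hV : ∀ ω, V ω = ∫ t in Ioc 0 θ, v t ω)
    (sigmaTildeSq : ℝ) (hsigmaTildeSq : sigmaTildeSq = ∫ ω, V ω ∂μ)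
    (hM2 : ∫ ω, M ω ^ 2 ∂μ = sigmaTildeSq)
    (hZ : ∀ ω, Z ω = -(1 / 2) * V ω + M ω) :
    |variance Z μ - sigmaTildeSq| ≤
      (1 / 4) * variance V μ + Real.sqrt sigmaTildeSq * Real.sqrt (variance V μ) := by
  have hZfun : Z = fun ω => -(1 / 2) * V ω + M ω := funext hZ
  have hZ2int : MeasureTheory.MemLp Z 2 μ := by
    rw [hZfun]; exact (hV2int.const_mul _).add hM2int
  have hVint : Integrable V μ := hV2int.integrable one_le_two
  have hMint : Integrable M μ := hM2int.integrable one_le_two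
  have hVM : Integrable (fun ω => V ω * M ω) μ := aux_int_mul hV2int hM2int
  -- mean of Z
  have hEZ : ∫ ω, Z ω ∂μ = -(1 / 2) * sigmaTildeSq := by
    rw [hZfun, integral_add (hVint.const_mul _) hMint, integral_const_mul, hM0,
      hsigmaTildeSq]; ring
  -- second moment of Z
  have hEZ2 : ∫ ω, Z ω ^ 2 ∂μ =
      (1 / 4) * (∫ ω, V ω ^ 2 ∂μ) - (∫ ω, V ω * M ω ∂μ) + sigmaTildeSq := by
    have heq : (fun ω => Z ω ^ 2) = fun ω =>
        (1 / 4) * V ω ^ 2 + (-1 : ℝ) * (V ω * M ω) + M ω ^ 2 := by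
      funext ω; rw [hZ ω]; ring
    have hI1 : Integrable (fun ω => (1 / 4) * V ω ^ 2) μ := hV2int.integrable_sq.const_mul _
    have hI2 : Integrable (fun ω => (-1 : ℝ) * (V ω * M ω)) μ := hVM.const_mul _
    have hI12 : Integrable (fun ω => (1 / 4) * V ω ^ 2 + (-1 : ℝ) * (V ω * M ω)) μ := hI1.add hI2
    rw [show (∫ ω, Z ω ^ 2 ∂μ) = ∫ ω, (1 / 4) * V ω ^ 2 + (-1 : ℝ) * (V ω * M ω) + M ω ^ 2 ∂μ
        from by rw [← heq],
      show (∫ ω, (1 / 4) * V ω ^ 2 + (-1 : ℝ) * (V ω * M ω) + M ω ^ 2 ∂μ) = _ from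
        integral_add hI12 hM2int.integrable_sq,
      integral_add hI1 hI2, integral_const_mul, integral_const_mul, hM2]
    ring
  have hVarZ : variance Z μ = (1 / 4) * variance V μ - ∫ ω, V ω * M ω ∂μ + sigmaTildeSq := by
    rw [variance_eq_sub hZ2int, variance_eq_sub hV2int]
    simp only [Pi.pow_apply]
    rw [hEZ2, hEZ, hsigmaTildeSq]
    ring
  -- bound the cross term using Cauchy-Schwarz on (V - E V) and M
  set c : ℝ := ∫ ω, V ω ∂μ with hc
  have hWmem : MeasureTheory.MemLp (fun ω => V ω - c) 2 μ :=
    hV2int.sub (memLp_const c)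
  have hcross : (∫ ω, V ω * M ω ∂μ) = ∫ ω, (V ω - c) * M ω ∂μ := by
    have : (fun ω => (V ω - c) * M ω) = fun ω => V ω * M ω - c * M ω := by
      funext ω; ring
    rw [this, integral_sub hVM (hMint.const_mul c), integral_const_mul, hM0, mul_zero, sub_zero]
  have hW2 : (∫ ω, (V ω - c) ^ 2 ∂μ) = variance V μ := by
    rw [variance_eq_integral hV2int.aestronglyMeasurable.aemeasurable]
  have hcsb : |∫ ω, V ω * M ω ∂μ| ≤
      Real.sqrt (variance V μ) * Real.sqrt sigmaTildeSq := by
    rw [hcross]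
    calc |∫ ω, (V ω - c) * M ω ∂μ|
        ≤ Real.sqrt (∫ ω, (V ω - c) ^ 2 ∂μ) * Real.sqrt (∫ ω, M ω ^ 2 ∂μ) :=
          aux_cs hWmem hM2int
      _ = Real.sqrt (variance V μ) * Real.sqrt sigmaTildeSq := by rw [hW2, hM2]
  have hVarVnn : (0:ℝ) ≤ variance V μ := variance_nonneg _ _
  rw [hVarZ]
  have habs : |(1 / 4) * variance V μ - ∫ ω, V ω * M ω ∂μ + sigmaTildeSq - sigmaTildeSq|
      = |(1 / 4) * variance V μ - ∫ ω, V ω * M ω ∂μ| := by ring_nf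
  calc |(1 / 4) * variance V μ - (∫ ω, V ω * M ω ∂μ) + sigmaTildeSq - sigmaTildeSq|
      = |(1 / 4) * variance V μ - ∫ ω, V ω * M ω ∂μ| := by ring_nf
    _ ≤ (1 / 4) * variance V μ + |∫ ω, V ω * M ω ∂μ| := by
        have h1 : |(1 / 4) * variance V μ| = (1 / 4) * variance V μ := by
          rw [abs_of_nonneg]; positivity
        calc |(1 / 4) * variance V μ - ∫ ω, V ω * M ω ∂μ|
            ≤ |(1 / 4) * variance V μ| + |∫ ω, V ω * M ω ∂μ| := abs_sub _ _
          _ = (1 / 4) * variance V μ + |∫ ω, V ω * M ω ∂μ| := by rw [h1]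
    _ ≤ (1 / 4) * variance V μ + Real.sqrt (variance V μ) * Real.sqrt sigmaTildeSq := by
        linarith [hcsb]
    _ = (1 / 4) * variance V μ + Real.sqrt sigmaTildeSq * Real.sqrt (variance V μ) := by ring
end
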